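/- Let 0 < a < ρ and let u : [a, ρ] → ℝ be twice continuously differentiable with u(a) = u(ρ) = 0, u'(a) = α > 0, u(r) > 0 for all r ∈ (a, ρ), and suppose u satisfies the Pucci differential inequalities at every r ∈ (a, ρ). Then u'(ρ) ≤ −√(λ/Λ)·(a/ρ)^{ñ−1}·α. -/

import Mathlib

open Real Set

/-- `P⁺[u](r)`: the Pucci maximal operator `𝓜⁺_{λ,Λ}` evaluated on the Hessian of the
radial function `v(x) = u(|x|)`, expressed through `u'` and `u''`. -/
noncomputable def Pp (n : ℕ) (lam Lam : ℝ) (u' u'' : ℝ → ℝ) (r : ℝ) : ℝ :=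
  Lam * max (u'' r) 0 + lam * min (u'' r) 0 +
    ((n : ℝ) - 1) * (Lam * max (u' r / r) 0 + lam * min (u' r / r) 0)

/-- `P⁻[u](r)`: the Pucci minimal operator `𝓜⁻_{λ,Λ}` evaluated on the Hessian of the
radial function `v(x) = u(|x|)`. -/
noncomputable def Pm (n : ℕ) (lam Lam : ℝ) (u' u'' : ℝ → ℝ) (r : ℝ) : ℝ :=
  lam * max (u'' r) 0 + Lam * min (u'' r) 0 +
    ((n : ℝ) - 1) * (lam * max (u' r / r) 0 + Lam * min (u' r / r) 0)

/-- `u` satisfies the Pucci differential inequalities at `r`: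
`−P⁺[u](r) ≤ |u(r)|^{p−1}u(r) ≤ −P⁻[u](r)`. -/
def PucciIneq (n : ℕ) (lam Lam p : ℝ) (u u' u'' : ℝ → ℝ) (r : ℝ) : Prop :=
  -Pp n lam Lam u' u'' r ≤ |u r| ^ (p - 1) * u r ∧
    |u r| ^ (p - 1) * u r ≤ -Pm n lam Lam u' u'' r

section Aux

lemma mono_Icc {f f' : ℝ → ℝ} {s t : ℝ} (hst : s ≤ t)
    (hc : ContinuousOn f (Icc s t))
    (hd : ∀ r ∈ Ioo s t, HasDerivAt f (f' r) r)
    (h0 : ∀ r ∈ Ioo s t, 0 ≤ f' r) : f s ≤ f t := by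
  have hm : MonotoneOn f (Icc s t) := by
    apply monotoneOn_of_deriv_nonneg (convex_Icc s t) hc
    · rw [interior_Icc]
      exact fun r hr => (hd r hr).differentiableAt.differentiableWithinAt
    · rw [interior_Icc]
      intro r hr
      rw [(hd r hr).deriv]
      exact h0 r hr
  exact hm (left_mem_Icc.2 hst) (right_mem_Icc.2 hst) hst

lemma anti_Icc {f f' : ℝ → ℝ} {s t : ℝ} (hst : s ≤ t)
    (hc : ContinuousOn f (Icc s t))
    (hd : ∀ r ∈ Ioo s t, HasDerivAt f (f' r) r)
    (h0 : ∀ r ∈ Ioo s t, f' r ≤ 0) : f t ≤ f s := by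
  have := mono_Icc (f := fun r => -f r) (f' := fun r => -f' r) hst hc.neg
    (fun r hr => (hd r hr).neg) (fun r hr => neg_nonneg.2 (h0 r hr))
  simpa using this

lemma energy_hasDeriv (lam cQ p e : ℝ) (hp1 : p + 1 ≠ 0) (u u' u'' : ℝ → ℝ) (r : ℝ)
    (hr : 0 < r) (hur : 0 < u r)
    (hdu : HasDerivAt u (u' r) r) (hdu' : HasDerivAt u' (u'' r) r) :
    HasDerivAt (fun s => s ^ e * (lam * (u' s)^2/2 + cQ * (u s)^(p+1)/(p+1)))
      (e * r^(e-1) * (lam * (u' r)^2/2 + cQ * (u r)^(p+1)/(p+1))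
        + r^e * (lam * (u' r * u'' r) + cQ * ((u r)^p * u' r))) r := by
  have hA : HasDerivAt (fun s : ℝ => s ^ e) (e * r^(e-1)) r :=
    Real.hasDerivAt_rpow_const (Or.inl hr.ne')
  have hB : HasDerivAt (fun s => (u' s)^2) (2 * u' r ^ 1 * u'' r) r := hdu'.pow 2
  have hC : HasDerivAt (fun s => (u s)^(p+1)) (u' r * (p+1) * u r ^ (p+1-1)) r :=
    hdu.rpow_const (Or.inl hur.ne')
  have hH := ((hB.const_mul lam).div_const 2).add ((hC.const_mul cQ).div_const (p+1))
  have hG := hA.mul hH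
  refine hG.congr_deriv ?_
  simp only [Pi.add_apply]
  rw [show p + 1 - 1 = p by ring]
  field_simp

-- up-phase: V > 0
lemma lemA (lam Lam k r V W Q : ℝ) (hlam : 0 < lam) (hlL : lam ≤ Lam) (hk : 1 ≤ k)
    (hr : 0 < r) (hQ : 0 ≤ Q) (hV : 0 < V)
    (h1 : -(Lam * max W 0 + lam * min W 0 + k * (Lam * max (V/r) 0 + lam * min (V/r) 0)) ≤ Q)
    (h2 : Q ≤ -(lam * max W 0 + Lam * min W 0 + k * (lam * max (V/r) 0 + Lam * min (V/r) 0))) :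
    W + (k*lam/Lam) * (V/r) ≤ 0 ∧ -(Lam * k * (V^2/r)) ≤ lam * (V*W) + Q*V := by
  have hLam : 0 < Lam := lt_of_lt_of_le hlam hlL
  have hVr : 0 < V / r := div_pos hV hr
  rw [max_eq_left hVr.le, min_eq_right hVr.le] at h1 h2
  have hW : W < 0 := by
    by_contra h
    push_neg at h
    rw [max_eq_left h, min_eq_right h] at h2
    nlinarith [mul_pos (mul_pos (lt_of_lt_of_le one_pos hk) hlam) hVr]
  rw [max_eq_right hW.le, min_eq_left hW.le] at h1 h2
  simp only [mul_zero, zero_add, add_zero] at h1 h2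
  constructor
  · have he : W + (k*lam/Lam) * (V/r) = (Lam * W + k * lam * (V/r)) / Lam := by
      field_simp
    rw [he]
    apply div_nonpos_of_nonpos_of_nonneg _ hLam.le
    nlinarith
  · have h1' : -Q - k * (Lam * (V/r)) ≤ lam * W := by linarith
    have h3 := mul_le_mul_of_nonneg_right h1' hV.le
    have hx : (-Q - k * (Lam * (V/r))) * V = -(Q*V) - Lam*k*(V^2/r) := by ring
    rw [hx] at h3
    have hy : lam * W * V = lam * (V*W) := by ring
    rw [hy] at h3
    linarith

-- down-phase: V ≤ 0
lemma lemB (lam Lam k r V W Q : ℝ) (hlam : 0 < lam) (hlL : lam ≤ Lam) (hk : 1 ≤ k)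
    (hr : 0 < r) (hQ : 0 ≤ Q) (hV : V ≤ 0)
    (h2 : Q ≤ -(lam * max W 0 + Lam * min W 0 + k * (lam * max (V/r) 0 + Lam * min (V/r) 0))) :
    -(Lam * k * (V^2/r)) ≤ lam * (V*W) + (lam/Lam) * (Q*V) := by
  have hLam : 0 < Lam := lt_of_lt_of_le hlam hlL
  have hk0 : (0:ℝ) ≤ k := le_trans zero_le_one hk
  rcases eq_or_lt_of_le hV with he | hV
  · rw [he]
    norm_num
  have hVr : V / r < 0 := div_neg_of_neg_of_pos hV hr
  rw [max_eq_right hVr.le, min_eq_left hVr.le] at h2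
  simp only [mul_zero, zero_add] at h2
  have hQV : Q * V ≤ 0 := mul_nonpos_of_nonneg_of_nonpos hQ hV.le
  have hlL1 : lam / Lam ≤ 1 := div_le_one_of_le₀ hlL hLam.le
  rcases le_or_gt 0 W with hW | hW
  · rw [max_eq_left hW, min_eq_right hW] at h2
    simp only [mul_zero, add_zero] at h2
    have h2' : lam * W ≤ -Q - k * (Lam * (V/r)) := by linarith
    have h3 := mul_le_mul_of_nonpos_right h2' hV.le
    have hx : (-Q - k * (Lam * (V/r))) * V = -(Q*V) - Lam*k*(V^2/r) := by ring
    rw [hx] at h3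
    have hy : lam * W * V = lam * (V*W) := by ring
    rw [hy] at h3
    have h5 : 0 ≤ (lam/Lam - 1)*(Q*V) := by nlinarith
    have h6 : (lam/Lam - 1)*(Q*V) = (lam/Lam)*(Q*V) - Q*V := by ring
    linarith
  · rw [max_eq_right hW.le, min_eq_left hW.le] at h2
    simp only [mul_zero, zero_add] at h2
    have h2' : Lam * W ≤ -Q - k * (Lam * (V/r)) := by linarith
    have h3 := mul_le_mul_of_nonpos_right h2' hV.le
    have h4 := mul_le_mul_of_nonneg_left h3 (le_of_lt (div_pos hlam hLam) : (0:ℝ) ≤ lam/Lam)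
    have he1 : (lam/Lam) * (Lam * W * V) = lam * (V * W) := by field_simp
    rw [he1] at h4
    have he2 : (lam/Lam) * ((-Q - k * (Lam * (V/r))) * V)
        = -((lam/Lam)*(Q*V)) - lam*k*(V^2/r) := by field_simp
    rw [he2] at h4
    have h5 : 0 ≤ (Lam - lam)*(k*(V^2/r)) :=
      mul_nonneg (by linarith) (mul_nonneg hk0 (by positivity))
    nlinarith

end Aux

set_option maxHeartbeats 1600000 in
/-- Estimate (3.5) in the paper: for a positive radial arc vanishing at both endpoints,
`u'(ρ) ≤ −√(λ/Λ) (a/ρ)^{ñ₋−1} α`. -/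
theorem exit_slope_upper_bound
    (n : ℕ) (hn : 2 ≤ n) (lam Lam p ntil : ℝ) (hlam : 0 < lam) (hlL : lam ≤ Lam) (hp : 1 < p)
    (hnt : ntil = Lam / lam * ((n : ℝ) - 1) + 1)
    (a ρ α : ℝ) (ha : 0 < a) (haρ : a < ρ) (hα : 0 < α)
    (u u' u'' : ℝ → ℝ)
    (hu : ∀ r ∈ Icc a ρ, HasDerivAt u (u' r) r)
    (hu' : ∀ r ∈ Icc a ρ, HasDerivAt u' (u'' r) r)
    (hu'' : ContinuousOn u'' (Icc a ρ))
    (hua : u a = 0) (huρ : u ρ = 0) (hu'a : u' a = α)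
    (hpos : ∀ r ∈ Ioo a ρ, 0 < u r)
    (hPucci : ∀ r ∈ Ioo a ρ, PucciIneq n lam Lam p u u' u'' r) :
    u' ρ ≤ -(Real.sqrt (lam / Lam) * (a / ρ) ^ (ntil - 1) * α) := by
  have hLam : 0 < Lam := lt_of_lt_of_le hlam hlL
  have hρ : 0 < ρ := lt_trans ha haρ
  have hk : (1:ℝ) ≤ (n:ℝ) - 1 := by
    have : (2:ℝ) ≤ (n:ℝ) := by exact_mod_cast hn
    linarith
  have hN1 : (1:ℝ) ≤ ntil - 1 := by
    rw [hnt]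
    have h1 : (1:ℝ) ≤ Lam / lam := (one_le_div hlam).2 hlL
    have h0 : (0:ℝ) ≤ Lam / lam := le_trans zero_le_one h1
    have h2 := mul_le_mul_of_nonneg_left hk h0
    have h3 : Lam / lam * 1 = Lam / lam := mul_one _
    linarith
  have hNlam : (ntil - 1) * lam = Lam * ((n:ℝ) - 1) := by
    rw [hnt]
    field_simp
    ring
  have hp1 : (0:ℝ) < p + 1 := by linarith
  have hcu : ContinuousOn u (Icc a ρ) := fun r hr => ((hu r hr).continuousAt).continuousWithinAt
  have hcu' : ContinuousOn u' (Icc a ρ) := fun r hr => ((hu' r hr).continuousAt).continuousWithinAt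
  have hPuc : ∀ r ∈ Ioo a ρ,
      -(Lam * max (u'' r) 0 + lam * min (u'' r) 0 +
          ((n:ℝ)-1) * (Lam * max (u' r / r) 0 + lam * min (u' r / r) 0)) ≤ u r ^ p ∧
      u r ^ p ≤ -(lam * max (u'' r) 0 + Lam * min (u'' r) 0 +
          ((n:ℝ)-1) * (lam * max (u' r / r) 0 + Lam * min (u' r / r) 0)) := by
    intro r hr
    obtain ⟨hq1, hq2⟩ := hPucci r hr
    have hur := hpos r hr
    have hprod : |u r| ^ (p-1) * u r = u r ^ p := by
      rw [abs_of_pos hur]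
      have h := Real.rpow_add hur (p-1) 1
      rw [Real.rpow_one] at h
      rw [show p - 1 + 1 = p by ring] at h
      exact h.symm
    rw [hprod] at hq1 hq2
    unfold Pp at hq1
    unfold Pm at hq2
    exact ⟨hq1, hq2⟩
  -- u'(ρ) ≤ 0
  have hu'ρ : u' ρ ≤ 0 := by
    have h1 : HasDerivWithinAt u (u' ρ) (Iio ρ) ρ :=
      (hu ρ (right_mem_Icc.2 haρ.le)).hasDerivWithinAt
    rw [hasDerivWithinAt_iff_tendsto_slope] at h1
    have hne : (Iio ρ \ {ρ}) = Iio ρ := by simp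
    rw [hne] at h1
    refine le_of_tendsto h1 ?_
    have hmem : Ioo a ρ ∈ nhdsWithin ρ (Iio ρ) :=
      Ioo_mem_nhdsLT_of_mem ⟨haρ, le_refl ρ⟩
    filter_upwards [hmem] with r hr
    rw [slope_def_field, huρ, sub_zero]
    have h2 : 0 < u r := hpos r hr
    have h3 : r - ρ < 0 := by linarith [hr.2]
    exact div_nonpos_of_nonneg_of_nonpos h2.le h3.le
  -- the first zero of u'
  set T : Set ℝ := Icc a ρ ∩ u' ⁻¹' (Iic 0) with hT
  have hTclosed : IsClosed T := hcu'.preimage_isClosed_of_isClosed isClosed_Icc isClosed_Iic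
  have hTne : T.Nonempty := ⟨ρ, right_mem_Icc.2 haρ.le, hu'ρ⟩
  have hTbdd : BddBelow T := BddBelow.mono (fun r hr => hr.1) bddBelow_Icc
  set c := sInf T with hcdef
  have hcT : c ∈ T := hTclosed.csInf_mem hTne hTbdd
  have hac : a ≤ c := le_csInf hTne (fun r hr => hr.1.1)
  have hcρ : c ≤ ρ := csInf_le hTbdd ⟨right_mem_Icc.2 haρ.le, hu'ρ⟩
  have hu'cle : u' c ≤ 0 := hcT.2
  have hIco : ∀ r ∈ Ico a c, 0 < u' r := by
    intro r hr
    by_contra h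
    push_neg at h
    have : r ∈ T := ⟨⟨hr.1, le_trans hr.2.le hcρ⟩, h⟩
    exact absurd (csInf_le hTbdd this) (not_le.2 hr.2)
  have halt : a < c := by
    rcases eq_or_lt_of_le hac with h | h
    · exfalso; rw [← h, hu'a] at hu'cle; linarith
    · exact h
  have hu'c0 : u' c = 0 := by
    have hcmem : c ∈ Icc a ρ := ⟨hac, hcρ⟩
    have h1 : ContinuousWithinAt u' (Ico a c) c :=
      (hcu'.continuousWithinAt hcmem).mono (fun r hr => ⟨hr.1, le_trans hr.2.le hcρ⟩)
    have hnb : (nhdsWithin c (Ico a c)).NeBot := by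
      rw [← mem_closure_iff_nhdsWithin_neBot, closure_Ico halt.ne]
      exact ⟨hac, le_refl c⟩
    have h0 : 0 ≤ u' c :=
      ge_of_tendsto h1 (eventually_mem_nhdsWithin.mono (fun r hr => (hIco r hr).le))
    linarith
  -- u' ≤ 0 on [c, ρ]
  have hcneg : ∀ r ∈ Icc c ρ, u' r ≤ 0 := by
    intro d hd
    by_contra hdp
    push_neg at hdp
    have hdρ : d < ρ := by
      rcases eq_or_lt_of_le hd.2 with h | h
      · exfalso; rw [h] at hdp; linarith
      · exact h
    have hcd : c < d := by
      rcases eq_or_lt_of_le hd.1 with h | h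
      · exfalso; rw [← h, hu'c0] at hdp; linarith
      · exact h
    set T₂ : Set ℝ := Icc c d ∩ u' ⁻¹' (Iic 0) with hT₂
    have hsub2 : Icc c d ⊆ Icc a ρ := Icc_subset_Icc hac hd.2
    have hT₂closed : IsClosed T₂ :=
      (hcu'.mono hsub2).preimage_isClosed_of_isClosed isClosed_Icc isClosed_Iic
    have hT₂ne : T₂.Nonempty := ⟨c, left_mem_Icc.2 hcd.le, hu'c0.le⟩
    have hT₂bdd : BddAbove T₂ := BddAbove.mono (fun r hr => hr.1) bddAbove_Icc
    set e := sSup T₂ with hedef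
    have heT : e ∈ T₂ := hT₂closed.csSup_mem hT₂ne hT₂bdd
    have hce : c ≤ e := heT.1.1
    have hu'e : u' e ≤ 0 := heT.2
    have hed : e < d := by
      rcases eq_or_lt_of_le heT.1.2 with h | h
      · exfalso; rw [h] at hu'e; linarith
      · exact h
    have hpos' : ∀ r ∈ Ioc e d, 0 < u' r := by
      intro r hr
      by_contra h
      push_neg at h
      have : r ∈ T₂ := ⟨⟨le_trans hce hr.1.le, hr.2⟩, h⟩
      exact absurd (le_csSup hT₂bdd this) (not_le.2 hr.1)
    set m := ((n:ℝ)-1) * lam / Lam with hm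
    have hea : 0 < e := by linarith
    have hφ : (fun r => r ^ m * u' r) d ≤ (fun r => r ^ m * u' r) e := by
      apply anti_Icc (f' := fun r => m * r ^ (m-1) * u' r + r ^ m * u'' r) hed.le
      · apply ContinuousOn.mul
        · apply ContinuousOn.rpow_const continuousOn_id
          intro x hx
          left
          have : 0 < x := by linarith [hx.1]
          exact this.ne'
        · exact hcu'.mono (fun r hr => hsub2 ⟨le_trans hce hr.1, hr.2⟩)
      · intro r hr
        have hr0 : 0 < r := by linarith [hr.1]
        have hrmem : r ∈ Icc a ρ := ⟨by linarith [hr.1], by linarith [hr.2]⟩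
        exact (Real.hasDerivAt_rpow_const (Or.inl hr0.ne')).mul (hu' r hrmem)
      · intro r hr
        have hr0 : 0 < r := by linarith [hr.1]
        have hrIoo : r ∈ Ioo a ρ := ⟨by linarith [hr.1], by linarith [hr.2]⟩
        have hV : 0 < u' r := hpos' r ⟨hr.1, hr.2.le⟩
        have hQ0 : (0:ℝ) ≤ u r ^ p := Real.rpow_nonneg (hpos r hrIoo).le p
        obtain ⟨hP1, hP2⟩ := hPuc r hrIoo
        have hkey := (lemA lam Lam ((n:ℝ)-1) r (u' r) (u'' r) (u r ^ p)
          hlam hlL hk hr0 hQ0 hV hP1 hP2).1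
        have hrm : r ^ (m-1) = r ^ m / r := Real.rpow_sub_one hr0.ne' m
        rw [hrm]
        have heq : m * (r ^ m / r) * u' r + r ^ m * u'' r
            = r ^ m * (u'' r + m * (u' r / r)) := by ring
        rw [heq]
        apply mul_nonpos_of_nonneg_of_nonpos (Real.rpow_nonneg hr0.le m)
        rw [hm]
        exact hkey
    simp only at hφ
    have hφe : e ^ m * u' e ≤ 0 :=
      mul_nonpos_of_nonneg_of_nonpos (Real.rpow_nonneg hea.le m) hu'e
    have hφd : 0 < d ^ m * u' d :=
      mul_pos (Real.rpow_pos_of_pos (by linarith) m) hdp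
    linarith
  -- the energy exponent
  set E := 2 * (ntil - 1) with hE
  -- generic continuity of the energy
  have hcontG : ∀ (cQ s t : ℝ), a ≤ s → t ≤ ρ →
      ContinuousOn (fun r => r ^ E * (lam * (u' r)^2/2 + cQ * (u r)^(p+1)/(p+1))) (Icc s t) := by
    intro cQ s t has htρ
    have hsubst : Icc s t ⊆ Icc a ρ := Icc_subset_Icc has htρ
    apply ContinuousOn.mul
    · apply ContinuousOn.rpow_const continuousOn_id
      intro x hx
      left
      have : 0 < x := by linarith [hx.1]
      exact this.ne'
    · apply ContinuousOn.add
      · exact ((continuousOn_const.mul ((hcu'.mono hsubst).pow 2)).div_const 2)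
      · refine (continuousOn_const.mul ((hcu.mono hsubst).rpow_const ?_)).div_const (p+1)
        intro x hx
        exact Or.inr (by linarith)
  -- Phase 1 : on [a,c] with coefficient 1
  have hphase1 : (fun r => r ^ E * (lam * (u' r)^2/2 + 1 * (u r)^(p+1)/(p+1))) a ≤
      (fun r => r ^ E * (lam * (u' r)^2/2 + 1 * (u r)^(p+1)/(p+1))) c := by
    apply mono_Icc (f' := fun r => E * r^(E-1) * (lam * (u' r)^2/2 + 1 * (u r)^(p+1)/(p+1))
        + r^E * (lam * (u' r * u'' r) + 1 * ((u r)^p * u' r))) halt.le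
      (hcontG 1 a c le_rfl hcρ)
    · intro r hr
      have hrIoo : r ∈ Ioo a ρ := ⟨hr.1, lt_of_lt_of_le hr.2 hcρ⟩
      exact energy_hasDeriv lam 1 p E (ne_of_gt hp1) u u' u'' r (lt_trans ha hr.1)
        (hpos r hrIoo) (hu r ⟨hrIoo.1.le, hrIoo.2.le⟩) (hu' r ⟨hrIoo.1.le, hrIoo.2.le⟩)
    · intro r hr
      have hr0 : 0 < r := lt_trans ha hr.1
      have hrIoo : r ∈ Ioo a ρ := ⟨hr.1, lt_of_lt_of_le hr.2 hcρ⟩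
      have hV : 0 < u' r := hIco r ⟨hr.1.le, hr.2⟩
      have hQ0 : (0:ℝ) ≤ u r ^ p := Real.rpow_nonneg (hpos r hrIoo).le p
      obtain ⟨hP1, hP2⟩ := hPuc r hrIoo
      have hkey := (lemA lam Lam ((n:ℝ)-1) r (u' r) (u'' r) (u r ^ p)
        hlam hlL hk hr0 hQ0 hV hP1 hP2).2
      have hrpe : 0 < r ^ E := Real.rpow_pos_of_pos hr0 E
      have hmul := mul_le_mul_of_nonneg_left hkey hrpe.le
      have hre : r ^ (E-1) = r ^ E / r := Real.rpow_sub_one hr0.ne' E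
      have hUp1 : (0:ℝ) ≤ (u r)^(p+1) := Real.rpow_nonneg (hpos r hrIoo).le (p+1)
      rw [hre]
      have hid : r ^ E * (Lam*((n:ℝ)-1)*((u' r)^2/r)) = (ntil-1)*lam*((u' r)^2*(r^E/r)) := by
        rw [← hNlam]; ring
      have hterm : 0 ≤ (ntil-1) * (r^E/r) * ((u r)^(p+1)/(p+1)) := by
        apply mul_nonneg (mul_nonneg (by linarith) (by positivity)) (by positivity)
      have hsplit : E*(r^E/r)*(lam * (u' r)^2/2 + 1 * (u r)^(p+1)/(p+1))
          = (ntil-1)*lam*((u' r)^2*(r^E/r))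
            + 2*((ntil-1) * (r^E/r) * ((u r)^(p+1)/(p+1))) := by
        rw [hE]; ring
      linarith [hmul, hid, hterm, hsplit]
  -- Phase 2 : on [c,ρ] with coefficient lam/Lam
  have hphase2 : (fun r => r ^ E * (lam * (u' r)^2/2 + (lam/Lam) * (u r)^(p+1)/(p+1))) c ≤
      (fun r => r ^ E * (lam * (u' r)^2/2 + (lam/Lam) * (u r)^(p+1)/(p+1))) ρ := by
    apply mono_Icc (f' := fun r => E * r^(E-1) * (lam * (u' r)^2/2 + (lam/Lam) * (u r)^(p+1)/(p+1))
        + r^E * (lam * (u' r * u'' r) + (lam/Lam) * ((u r)^p * u' r))) hcρ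
      (hcontG (lam/Lam) c ρ hac le_rfl)
    · intro r hr
      have hrIoo : r ∈ Ioo a ρ := ⟨lt_of_lt_of_le halt hr.1.le, hr.2⟩
      exact energy_hasDeriv lam (lam/Lam) p E (ne_of_gt hp1) u u' u'' r (lt_trans ha hrIoo.1)
        (hpos r hrIoo) (hu r ⟨hrIoo.1.le, hrIoo.2.le⟩) (hu' r ⟨hrIoo.1.le, hrIoo.2.le⟩)
    · intro r hr
      have hrIoo : r ∈ Ioo a ρ := ⟨lt_of_lt_of_le halt hr.1.le, hr.2⟩
      have hr0 : 0 < r := lt_trans ha hrIoo.1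
      have hV : u' r ≤ 0 := hcneg r ⟨hr.1.le, hr.2.le⟩
      have hQ0 : (0:ℝ) ≤ u r ^ p := Real.rpow_nonneg (hpos r hrIoo).le p
      obtain ⟨hP1, hP2⟩ := hPuc r hrIoo
      have hkey := lemB lam Lam ((n:ℝ)-1) r (u' r) (u'' r) (u r ^ p)
        hlam hlL hk hr0 hQ0 hV hP2
      have hrpe : 0 < r ^ E := Real.rpow_pos_of_pos hr0 E
      have hmul := mul_le_mul_of_nonneg_left hkey hrpe.le
      have hre : r ^ (E-1) = r ^ E / r := Real.rpow_sub_one hr0.ne' E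
      have hUp1 : (0:ℝ) ≤ (u r)^(p+1) := Real.rpow_nonneg (hpos r hrIoo).le (p+1)
      rw [hre]
      have hid : r ^ E * (Lam*((n:ℝ)-1)*((u' r)^2/r)) = (ntil-1)*lam*((u' r)^2*(r^E/r)) := by
        rw [← hNlam]; ring
      have hterm : 0 ≤ (ntil-1) * (r^E/r) * ((lam/Lam) * (u r)^(p+1)/(p+1)) := by
        apply mul_nonneg (mul_nonneg (by linarith) (by positivity)) (by positivity)
      have hsplit : E*(r^E/r)*(lam * (u' r)^2/2 + (lam/Lam) * (u r)^(p+1)/(p+1))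
          = (ntil-1)*lam*((u' r)^2*(r^E/r))
            + 2*((ntil-1) * (r^E/r) * ((lam/Lam) * (u r)^(p+1)/(p+1))) := by
        rw [hE]; ring
      linarith [hmul, hid, hterm, hsplit]
  simp only at hphase1 hphase2
  -- evaluate the energies
  have hz : (0:ℝ) ^ (p+1) = 0 := Real.zero_rpow (ne_of_gt hp1)
  have h1a : a ^ E * (lam * (u' a)^2/2 + 1 * (u a)^(p+1)/(p+1)) = a ^ E * (lam * α^2/2) := by
    rw [hua, hu'a, hz]; ring
  have h2ρ : ρ ^ E * (lam * (u' ρ)^2/2 + (lam/Lam) * (u ρ)^(p+1)/(p+1))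
      = ρ ^ E * (lam * (u' ρ)^2/2) := by
    rw [huρ, hz]; ring
  have h12c : c ^ E * (lam * (u' c)^2/2 + (lam/Lam) * (u c)^(p+1)/(p+1))
      = (lam/Lam) * (c ^ E * (lam * (u' c)^2/2 + 1 * (u c)^(p+1)/(p+1)))
        + (1 - lam/Lam) * (c ^ E * (lam * (u' c)^2/2)) := by
    ring
  rw [h1a] at hphase1
  rw [h2ρ] at hphase2
  have hu'c2 : lam * (u' c)^2/2 = 0 := by rw [hu'c0]; ring
  have hkey3 : (lam/Lam) * (a ^ E * (lam * α^2/2)) ≤ ρ ^ E * (lam * (u' ρ)^2/2) := by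
    rw [h12c, hu'c2] at hphase2
    rw [hu'c2] at hphase1
    simp only [mul_zero] at hphase2
    have h4 := mul_le_mul_of_nonneg_left hphase1 (le_of_lt (div_pos hlam hLam))
    linarith
  -- final computation
  set β := Real.sqrt (lam / Lam) * (a / ρ) ^ (ntil - 1) * α with hβdef
  have hβpos : 0 < β := by
    apply mul_pos (mul_pos _ _) hα
    · exact Real.sqrt_pos.2 (div_pos hlam hLam)
    · exact Real.rpow_pos_of_pos (div_pos ha hρ) _
  have haE : (0:ℝ) < a ^ E := Real.rpow_pos_of_pos ha E
  have hρE : (0:ℝ) < ρ ^ E := Real.rpow_pos_of_pos hρ E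
  have hβ2 : β^2 = (lam/Lam) * (a^E/ρ^E) * α^2 := by
    rw [hβdef]
    have h1 : (Real.sqrt (lam/Lam))^2 = lam/Lam := Real.sq_sqrt (le_of_lt (div_pos hlam hLam))
    have h2 : ((a/ρ) ^ (ntil-1))^2 = (a/ρ) ^ E := by
      rw [sq, ← Real.rpow_add (div_pos ha hρ)]
      congr 1
      rw [hE]; ring
    have h3 : (a/ρ) ^ E = a^E/ρ^E := Real.div_rpow ha.le hρ.le E
    calc (Real.sqrt (lam/Lam) * (a/ρ) ^ (ntil-1) * α)^2
        = (Real.sqrt (lam/Lam))^2 * ((a/ρ) ^ (ntil-1))^2 * α^2 := by ring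
      _ = (lam/Lam) * (a^E/ρ^E) * α^2 := by rw [h1, h2, h3]
  have hsq : β^2 ≤ (u' ρ)^2 := by
    rw [hβ2]
    have h2 : (lam/Lam)*(a^E/ρ^E)*α^2 * (ρ^E*(lam/2)) ≤ (u' ρ)^2 * (ρ^E*(lam/2)) := by
      have e1 : (lam/Lam)*(a^E/ρ^E)*α^2 * (ρ^E*(lam/2)) = (lam/Lam) * (a ^ E * (lam * α^2/2)) := by
        field_simp
      have e2 : (u' ρ)^2 * (ρ^E*(lam/2)) = ρ ^ E * (lam * (u' ρ)^2/2) := by ring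
      rw [e1, e2]
      exact hkey3
    exact le_of_mul_le_mul_right h2 (by positivity)
  have h1 : β ≤ |u' ρ| := by
    have h2 := Real.sqrt_le_sqrt hsq
    rwa [Real.sqrt_sq hβpos.le, Real.sqrt_sq_eq_abs] at h2
  rw [abs_of_nonpos hu'ρ] at h1
  linarith
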